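/- arXiv:2104.12104 — 3 statements merged into one kernel-verified Lean document; each statement's English description precedes it below -/
import Mathlib

section
/- Let (X,d) be a metric space and T : X → X. For all x, y ∈ X and n ∈ ℕ with n ≥ 1, the Feldman–Katok metric satisfies d_{FK_n}(x,y) ≤ (d̄_n(x,y))^{1/2}, where d̄_n is the mean metric. -/
open Filter Metric Set

variable {X : Type*} [MetricSpace X]

/-- The maximal cardinality of an `(n,δ)`-match of `x` and `y`: an order-preserving
bijection `π : D(π) → R(π)` between subsets of `{0,…,n-1}` such that
`d(T^i x, T^{π i} y) < δ` for all `i ∈ D(π)`, encoded by a pair of strictly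
increasing enumerations of `D(π)` and `R(π)`. -/
noncomputable def fkFit (T : X → X) (n : ℕ) (δ : ℝ) (x y : X) : ℕ :=
  sSup {k : ℕ | ∃ i j : Fin k → Fin n, StrictMono i ∧ StrictMono j ∧
    ∀ s, dist (T^[(i s : ℕ)] x) (T^[(j s : ℕ)] y) < δ}

/-- `f̄_{n,δ}(x,y) = 1 - (max match)/n`. -/
noncomputable def fkF (T : X → X) (n : ℕ) (δ : ℝ) (x y : X) : ℝ :=
  1 - (fkFit T n δ x y : ℝ) / n

/-- The Feldman–Katok metric `d_{FK_n}`. -/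
noncomputable def dFKn (T : X → X) (n : ℕ) (x y : X) : ℝ :=
  sInf {δ : ℝ | 0 < δ ∧ fkF T n δ x y < δ}

/-- The Feldman–Katok pseudometric `d_{FK}`. -/
noncomputable def dFK (T : X → X) (x y : X) : ℝ :=
  sInf {δ : ℝ | 0 < δ ∧ Filter.limsup (fun n => fkF T n δ x y) atTop < δ}

/-- `d_{FK_n}(x,y) ≤ (d̄_n(x,y))^{1/2}` where `d̄_n` is the mean metric. -/
theorem dFKn_le_sqrt_mean (T : X → X) (x y : X) (n : ℕ) (hn : 1 ≤ n) :
    dFKn T n x y ≤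
      Real.sqrt ((1 / n : ℝ) * ∑ i ∈ Finset.range n, dist (T^[i] x) (T^[i] y)) := by
  have hn0 : (0:ℝ) < n := by exact_mod_cast hn
  set S : ℝ := (1 / n : ℝ) * ∑ i ∈ Finset.range n, dist (T^[i] x) (T^[i] y) with hSdef
  have hsum0 : (0:ℝ) ≤ ∑ i ∈ Finset.range n, dist (T^[i] x) (T^[i] y) :=
    Finset.sum_nonneg fun _ _ => dist_nonneg
  have hS0 : 0 ≤ S := by positivity
  apply le_of_forall_pos_le_add
  intro ε hε
  set δ : ℝ := Real.sqrt S + ε with hδdef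
  have hδ0 : 0 < δ := by positivity
  have hSlt : S < δ ^ 2 := by
    have h1 : Real.sqrt S ^ 2 = S := Real.sq_sqrt hS0
    nlinarith [Real.sqrt_nonneg S, sq_nonneg ε]
  -- the good set
  set G : Finset (Fin n) :=
    Finset.univ.filter (fun i => dist (T^[(i:ℕ)] x) (T^[(i:ℕ)] y) < δ) with hGdef
  have hfit : G.card ≤ fkFit T n δ x y := by
    apply le_csSup
    · refine ⟨n, fun k hk => ?_⟩
      obtain ⟨i, _, hi, _, _⟩ := hk
      simpa using Fintype.card_le_of_injective i hi.injective
    · refine ⟨fun s => (G.orderIsoOfFin rfl s : Fin n),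
        fun s => (G.orderIsoOfFin rfl s : Fin n), ?_, ?_, ?_⟩
      · exact fun a b h => (G.orderIsoOfFin rfl).strictMono h
      · exact fun a b h => (G.orderIsoOfFin rfl).strictMono h
      · intro s
        simpa using (Finset.mem_filter.mp (G.orderIsoOfFin rfl s).2).2
  -- Markov bound on the bad set
  have hcard : (G.card : ℝ) + (Gᶜ.card : ℝ) = n := by
    have := Finset.card_add_card_compl G
    rw [Fintype.card_fin] at this
    exact_mod_cast this
  have hmarkov : δ * (Gᶜ.card : ℝ) ≤ n * S := by
    have h1 : δ * (Gᶜ.card : ℝ) ≤ ∑ i ∈ Gᶜ, dist (T^[(i:ℕ)] x) (T^[(i:ℕ)] y) := by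
      rw [mul_comm, ← nsmul_eq_mul]
      apply Finset.card_nsmul_le_sum
      intro i hi
      rw [hGdef, Finset.mem_compl, Finset.mem_filter] at hi
      push_neg at hi
      exact hi (Finset.mem_univ i)
    have h2 : ∑ i ∈ Gᶜ, dist (T^[(i:ℕ)] x) (T^[(i:ℕ)] y)
        ≤ ∑ i : Fin n, dist (T^[(i:ℕ)] x) (T^[(i:ℕ)] y) :=
      Finset.sum_le_sum_of_subset_of_nonneg (Finset.subset_univ _)
        (fun _ _ _ => dist_nonneg)
    have h3 : ∑ i : Fin n, dist (T^[(i:ℕ)] x) (T^[(i:ℕ)] y)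
        = ∑ i ∈ Finset.range n, dist (T^[i] x) (T^[i] y) :=
      Fin.sum_univ_eq_sum_range (fun i => dist (T^[i] x) (T^[i] y)) n
    have h4 : n * S = ∑ i ∈ Finset.range n, dist (T^[i] x) (T^[i] y) := by
      rw [hSdef]; field_simp
    linarith
  have hFlt : fkF T n δ x y < δ := by
    have hbad : (Gᶜ.card : ℝ) / n ≤ S / δ := by
      rw [div_le_div_iff₀ hn0 hδ0]
      linarith [hmarkov]
    have hSδ : S / δ < δ := by
      rw [div_lt_iff₀ hδ0]
      nlinarith
    have hfk : fkF T n δ x y ≤ 1 - (G.card : ℝ) / n := by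
      unfold fkF
      have h : (G.card : ℝ) / n ≤ (fkFit T n δ x y : ℝ) / n := by
        gcongr

      linarith
    have heq : 1 - (G.card : ℝ) / n = (Gᶜ.card : ℝ) / n := by
      field_simp
      linarith
    linarith [hfk, heq ▸ hfk]
  have hmem : δ ∈ {δ : ℝ | 0 < δ ∧ fkF T n δ x y < δ} := ⟨hδ0, hFlt⟩
  calc dFKn T n x y ≤ δ := csInf_le ⟨0, fun a ha => ha.1.le⟩ hmem
    _ = Real.sqrt S + ε := rfl
end

section
/- Let (X,d) be a metric space, T : X → X, and n ≥ 1. Then d_{FK_n} is a metric on X: it is nonnegative, symmetric, vanishes exactly when x = y, and satisfies the triangle inequality. -/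
open Filter Metric Set

variable {X : Type*} [MetricSpace X]

lemma fkSet_bdd (T : X → X) (n : ℕ) (δ : ℝ) (x y : X) :
    ∀ k ∈ {k : ℕ | ∃ i j : Fin k → Fin n, StrictMono i ∧ StrictMono j ∧
      ∀ s, dist (T^[(i s : ℕ)] x) (T^[(j s : ℕ)] y) < δ}, k ≤ n := by
  rintro k ⟨i, j, hi, hj, h⟩
  simpa using Fintype.card_le_of_injective i hi.injective

lemma fkSet_zero_mem (T : X → X) (n : ℕ) (δ : ℝ) (x y : X) :
    0 ∈ {k : ℕ | ∃ i j : Fin k → Fin n, StrictMono i ∧ StrictMono j ∧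
      ∀ s, dist (T^[(i s : ℕ)] x) (T^[(j s : ℕ)] y) < δ} :=
  ⟨Fin.elim0, Fin.elim0, fun s => s.elim0, fun s => s.elim0, fun s => s.elim0⟩

lemma le_fkFit (T : X → X) (n : ℕ) (δ : ℝ) (x y : X) {k : ℕ}
    (hk : ∃ i j : Fin k → Fin n, StrictMono i ∧ StrictMono j ∧
      ∀ s, dist (T^[(i s : ℕ)] x) (T^[(j s : ℕ)] y) < δ) :
    k ≤ fkFit T n δ x y :=
  le_csSup ⟨n, fun _ h => fkSet_bdd T n δ x y _ h⟩ hk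

lemma fkFit_le (T : X → X) (n : ℕ) (δ : ℝ) (x y : X) : fkFit T n δ x y ≤ n :=
  csSup_le ⟨0, fkSet_zero_mem T n δ x y⟩ (fkSet_bdd T n δ x y)

lemma fkFit_mem (T : X → X) (n : ℕ) (δ : ℝ) (x y : X) :
    ∃ i j : Fin (fkFit T n δ x y) → Fin n, StrictMono i ∧ StrictMono j ∧
      ∀ s, dist (T^[(i s : ℕ)] x) (T^[(j s : ℕ)] y) < δ :=
  Nat.sSup_mem ⟨0, fkSet_zero_mem T n δ x y⟩ ⟨n, fun _ h => fkSet_bdd T n δ x y _ h⟩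

lemma fkFit_symm (T : X → X) (n : ℕ) (δ : ℝ) (x y : X) :
    fkFit T n δ x y = fkFit T n δ y x := by
  unfold fkFit
  congr 1
  ext k
  constructor <;> rintro ⟨i, j, hi, hj, h⟩ <;>
    exact ⟨j, i, hj, hi, fun s => by rw [dist_comm]; exact h s⟩

lemma fkFit_self (T : X → X) (n : ℕ) {δ : ℝ} (hδ : 0 < δ) (x : X) :
    fkFit T n δ x x = n :=
  le_antisymm (fkFit_le T n δ x x)
    (le_fkFit T n δ x x ⟨id, id, strictMono_id, strictMono_id,
      fun s => by simpa using hδ⟩)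

lemma fkF_le_one (T : X → X) (n : ℕ) (δ : ℝ) (x y : X) : fkF T n δ x y ≤ 1 := by
  have : (0:ℝ) ≤ (fkFit T n δ x y : ℝ) / n := by positivity
  unfold fkF; linarith

lemma fkF_nonneg (T : X → X) {n : ℕ} (hn : 1 ≤ n) (δ : ℝ) (x y : X) :
    0 ≤ fkF T n δ x y := by
  have h1 : (fkFit T n δ x y : ℝ) ≤ n := Nat.cast_le.2 (fkFit_le T n δ x y)
  have hn' : (0:ℝ) < n := by exact_mod_cast hn
  have : (fkFit T n δ x y : ℝ) / n ≤ 1 := by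
    rw [div_le_one hn']; exact h1
  unfold fkF; linarith

lemma two_mem_fkSet (T : X → X) (n : ℕ) (x y : X) :
    (2:ℝ) ∈ {δ : ℝ | 0 < δ ∧ fkF T n δ x y < δ} :=
  ⟨by norm_num, lt_of_le_of_lt (fkF_le_one T n _ x y) (by norm_num)⟩

lemma fk_comp {T : X → X} {n k₁ k₂ : ℕ} {δ₁ δ₂ : ℝ} {x y z : X}
    (i₁ j₁ : Fin k₁ → Fin n) (i₂ j₂ : Fin k₂ → Fin n)
    (hi₁ : StrictMono i₁) (hj₁ : StrictMono j₁)
    (h₁ : ∀ s, dist (T^[(i₁ s : ℕ)] x) (T^[(j₁ s : ℕ)] y) < δ₁)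
    (hi₂ : StrictMono i₂) (hj₂ : StrictMono j₂)
    (h₂ : ∀ s, dist (T^[(i₂ s : ℕ)] y) (T^[(j₂ s : ℕ)] z) < δ₂) :
    ∃ m : ℕ, k₁ + k₂ ≤ m + n ∧ ∃ i j : Fin m → Fin n, StrictMono i ∧ StrictMono j ∧
      ∀ s, dist (T^[(i s : ℕ)] x) (T^[(j s : ℕ)] z) < δ₁ + δ₂ := by
  classical
  refine ⟨((Finset.image j₁ Finset.univ) ∩ (Finset.image i₂ Finset.univ)).card, ?_, ?_⟩
  · have h1 : (Finset.image j₁ Finset.univ).card = k₁ := by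
      rw [Finset.card_image_of_injective _ hj₁.injective]; simp
    have h2 : (Finset.image i₂ Finset.univ).card = k₂ := by
      rw [Finset.card_image_of_injective _ hi₂.injective]; simp
    have h3 : (Finset.image j₁ Finset.univ ∪ Finset.image i₂ Finset.univ).card ≤ n := by
      simpa using Finset.card_le_univ
        (Finset.image j₁ Finset.univ ∪ Finset.image i₂ Finset.univ)
    have h4 := Finset.card_inter_add_card_union (Finset.image j₁ Finset.univ)
      (Finset.image i₂ Finset.univ)
    omega
  · set C := (Finset.image j₁ Finset.univ) ∩ (Finset.image i₂ Finset.univ) with hC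
    let e : Fin C.card ↪o Fin n := C.orderEmbOfFin rfl
    have he : ∀ s : Fin C.card, e s ∈ C := fun s => C.orderEmbOfFin_mem rfl s
    have hφ : ∀ s : Fin C.card, ∃ a : Fin k₁, j₁ a = e s := by
      intro s
      have := (Finset.mem_inter.1 (he s)).1
      simpa using Finset.mem_image.1 this
    have hψ : ∀ s : Fin C.card, ∃ b : Fin k₂, i₂ b = e s := by
      intro s
      have := (Finset.mem_inter.1 (he s)).2
      simpa using Finset.mem_image.1 this
    choose φ hφ' using hφ
    choose ψ hψ' using hψ
    have hφmono : StrictMono φ := by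
      intro s t hst
      have : j₁ (φ s) < j₁ (φ t) := by rw [hφ' s, hφ' t]; exact e.strictMono hst
      exact hj₁.lt_iff_lt.1 this
    have hψmono : StrictMono ψ := by
      intro s t hst
      have : i₂ (ψ s) < i₂ (ψ t) := by rw [hψ' s, hψ' t]; exact e.strictMono hst
      exact hi₂.lt_iff_lt.1 this
    refine ⟨i₁ ∘ φ, j₂ ∘ ψ, hi₁.comp hφmono, hj₂.comp hψmono, fun s => ?_⟩
    have hkey : dist (T^[(i₁ (φ s) : ℕ)] x) (T^[(j₂ (ψ s) : ℕ)] z) ≤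
        dist (T^[(i₁ (φ s) : ℕ)] x) (T^[(j₁ (φ s) : ℕ)] y) +
        dist (T^[(i₂ (ψ s) : ℕ)] y) (T^[(j₂ (ψ s) : ℕ)] z) := by
      have heq : j₁ (φ s) = i₂ (ψ s) := by rw [hφ' s, hψ' s]
      rw [heq]
      exact dist_triangle _ _ _
    calc dist (T^[((i₁ ∘ φ) s : ℕ)] x) (T^[((j₂ ∘ ψ) s : ℕ)] z) ≤ _ := hkey
      _ < δ₁ + δ₂ := add_lt_add (h₁ (φ s)) (h₂ (ψ s))

lemma fkFit_triangle (T : X → X) (n : ℕ) (δ₁ δ₂ : ℝ) (x y z : X) :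
    fkFit T n δ₁ x y + fkFit T n δ₂ y z ≤ fkFit T n (δ₁ + δ₂) x z + n := by
  obtain ⟨i₁, j₁, hi₁, hj₁, h₁⟩ := fkFit_mem T n δ₁ x y
  obtain ⟨i₂, j₂, hi₂, hj₂, h₂⟩ := fkFit_mem T n δ₂ y z
  obtain ⟨m, hm, i, j, hi, hj, h⟩ := fk_comp i₁ j₁ i₂ j₂ hi₁ hj₁ h₁ hi₂ hj₂ h₂
  have := le_fkFit T n (δ₁ + δ₂) x z ⟨i, j, hi, hj, h⟩
  omega

lemma fkF_triangle (T : X → X) {n : ℕ} (hn : 1 ≤ n) (δ₁ δ₂ : ℝ) (x y z : X) :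
    fkF T n (δ₁ + δ₂) x z ≤ fkF T n δ₁ x y + fkF T n δ₂ y z := by
  have h := fkFit_triangle T n δ₁ δ₂ x y z
  have hc : (fkFit T n δ₁ x y : ℝ) + fkFit T n δ₂ y z ≤ fkFit T n (δ₁ + δ₂) x z + n := by
    exact_mod_cast h
  have hn' : (0:ℝ) < n := by exact_mod_cast hn
  unfold fkF
  have hd : ((fkFit T n δ₁ x y : ℝ) + fkFit T n δ₂ y z) / n ≤
      ((fkFit T n (δ₁ + δ₂) x z : ℝ) + n) / n := by
    exact (div_le_div_iff_of_pos_right hn').2 hc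
  rw [add_div, add_div, div_self (ne_of_gt hn')] at hd
  linarith

/-- For `n ≥ 1`, `d_{FK_n}` is a metric on `X`: nonnegative, symmetric, vanishing
exactly on the diagonal, and satisfying the triangle inequality. -/
theorem dFKn_is_metric (T : X → X) (n : ℕ) (hn : 1 ≤ n) :
    (∀ x y : X, 0 ≤ dFKn T n x y) ∧
    (∀ x y : X, dFKn T n x y = dFKn T n y x) ∧
    (∀ x y : X, dFKn T n x y = 0 ↔ x = y) ∧
    (∀ x y z : X, dFKn T n x z ≤ dFKn T n x y + dFKn T n y z) := by
  have hbdd : ∀ x y : X, BddBelow {δ : ℝ | 0 < δ ∧ fkF T n δ x y < δ} :=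
    fun x y => ⟨0, fun δ hδ => le_of_lt hδ.1⟩
  have hne : ∀ x y : X, ({δ : ℝ | 0 < δ ∧ fkF T n δ x y < δ}).Nonempty :=
    fun x y => ⟨2, two_mem_fkSet T n x y⟩
  refine ⟨?_, ?_, ?_, ?_⟩
  · -- nonnegativity
    intro x y
    exact le_csInf (hne x y) fun δ hδ => le_of_lt hδ.1
  · -- symmetry
    intro x y
    unfold dFKn
    congr 1
    ext δ
    simp only [Set.mem_setOf_eq]
    rw [show fkF T n δ x y = fkF T n δ y x by unfold fkF; rw [fkFit_symm]]
  · -- vanishing iff equal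
    intro x y
    constructor
    · intro h0
      have hd : dist x y = 0 := by
        by_contra hne'
        have hpos : 0 < dist x y := lt_of_le_of_ne dist_nonneg (Ne.symm hne')
        set c : ℝ := min (dist x y) (1 / n) with hc
        have hcpos : 0 < c := lt_min hpos (by positivity)
        have hlt : sInf {δ : ℝ | 0 < δ ∧ fkF T n δ x y < δ} < c := by
          have : dFKn T n x y < c := by rw [h0]; exact hcpos
          exact this
        obtain ⟨δ, hδmem, hδlt⟩ := exists_lt_of_csInf_lt (hne x y) hlt
        obtain ⟨hδpos, hδF⟩ := hδmem
        -- fkFit = n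
        have hn' : (0:ℝ) < n := by exact_mod_cast hn
        have hδn : (n:ℝ) * δ < 1 := by
          have : δ < 1 / n := lt_of_lt_of_le hδlt (min_le_right _ _)
          calc (n:ℝ) * δ < n * (1/n) := by exact mul_lt_mul_of_pos_left this hn'
            _ = 1 := by field_simp
        have hfit : (n:ℝ) - fkFit T n δ x y < 1 := by
          unfold fkF at hδF
          have : (n:ℝ) * (1 - (fkFit T n δ x y : ℝ) / n) < n * δ :=
            mul_lt_mul_of_pos_left hδF hn'
          rw [mul_sub, mul_div_cancel₀ _ (ne_of_gt hn')] at this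
          linarith
        have hfitle := fkFit_le T n δ x y
        have hfiteq : fkFit T n δ x y = n := by
          have h1 : (n:ℝ) < fkFit T n δ x y + 1 := by linarith
          have : n < fkFit T n δ x y + 1 := by exact_mod_cast h1
          omega
        obtain ⟨i, j, hi, hj, hmatch⟩ := fkFit_mem T n δ x y
        have hne0 : n ≠ 0 := by omega
        haveI : NeZero n := ⟨hne0⟩
        have hk0 : 0 < fkFit T n δ x y := by omega
        set z0 : Fin (fkFit T n δ x y) := ⟨0, hk0⟩ with hz0
        have hcard : Fintype.card (Fin (fkFit T n δ x y)) = Fintype.card (Fin n) := by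
          simp [hfiteq]
        -- i z0 = 0 and j z0 = 0
        have hi0 : ∀ (f : Fin (fkFit T n δ x y) → Fin n), StrictMono f → f z0 = 0 := by
          intro f hf
          have hsurj : Function.Surjective f :=
            (((Fintype.bijective_iff_injective_and_card f).2 ⟨hf.injective, hcard⟩)).surjective
          obtain ⟨s, hs⟩ := hsurj 0
          have hle : f z0 ≤ f s := hf.monotone (Fin.mk_le_of_le_val (Nat.zero_le _))
          rw [hs] at hle
          exact le_antisymm hle (Fin.zero_le _)
        have hm := hmatch z0
        rw [hi0 i hi, hi0 j hj] at hm
        simp only [Fin.val_zero, Function.iterate_zero_apply] at hm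
        have : dist x y < dist x y := lt_of_lt_of_le (lt_trans hm hδlt) (min_le_left _ _)
        exact lt_irrefl _ this
      rw [← dist_eq_zero]; exact hd
    · intro h
      subst h
      unfold dFKn
      have hset : {δ : ℝ | 0 < δ ∧ fkF T n δ x x < δ} = Set.Ioi 0 := by
        ext δ
        simp only [Set.mem_setOf_eq, Set.mem_Ioi]
        constructor
        · exact fun h => h.1
        · intro hδ
          refine ⟨hδ, ?_⟩
          unfold fkF
          rw [fkFit_self T n hδ x]
          have hn' : (0:ℝ) < n := by exact_mod_cast hn
          rw [div_self (ne_of_gt hn')]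
          simpa using hδ
      rw [hset]
      exact csInf_Ioi
  · -- triangle inequality
    intro x y z
    have key : ∀ δ₁ ∈ {δ : ℝ | 0 < δ ∧ fkF T n δ x y < δ},
        ∀ δ₂ ∈ {δ : ℝ | 0 < δ ∧ fkF T n δ y z < δ},
        dFKn T n x z ≤ δ₁ + δ₂ := by
      rintro δ₁ ⟨h₁p, h₁F⟩ δ₂ ⟨h₂p, h₂F⟩
      apply csInf_le (hbdd x z)
      refine ⟨by linarith, ?_⟩
      calc fkF T n (δ₁ + δ₂) x z ≤ fkF T n δ₁ x y + fkF T n δ₂ y z :=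
            fkF_triangle T hn δ₁ δ₂ x y z
        _ < δ₁ + δ₂ := add_lt_add h₁F h₂F
    have h2 : ∀ δ₂ ∈ {δ : ℝ | 0 < δ ∧ fkF T n δ y z < δ},
        dFKn T n x z - δ₂ ≤ dFKn T n x y := by
      intro δ₂ h₂
      apply le_csInf (hne x y)
      intro δ₁ h₁
      linarith [key δ₁ h₁ δ₂ h₂]
    have h3 : dFKn T n x z - dFKn T n x y ≤ dFKn T n y z := by
      apply le_csInf (hne y z)
      intro δ₂ hδ₂
      linarith [h2 δ₂ hδ₂]
    linarith
end

section
/- Let (X,d) be a metric space and T : X → X. For all x,y ∈ X, F(x,y) ≤ 2·d̃_{FK}(x,y), where F is the weak-mean pseudometric and d̃_{FK} is the Feldman–Katok pseudometric without the order-preserving requirement. Assume additionally that d is bounded by 1 (or X has diameter ≤ 1). -/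
open Filter Metric Set

variable {X : Type*} [MetricSpace X]

/-- The maximal cardinality of an `(n,δ)*`-match of `x` and `y`: a not necessarily
order-preserving bijection `π : D(π) → R(π)` between subsets of `{0,…,n-1}` with
`d(T^i x, T^{π i} y) < δ` on its domain, encoded by a pair of injections. -/
noncomputable def wFit (T : X → X) (n : ℕ) (δ : ℝ) (x y : X) : ℕ :=
  sSup {k : ℕ | ∃ i j : Fin k → Fin n, Function.Injective i ∧ Function.Injective j ∧
    ∀ s, dist (T^[(i s : ℕ)] x) (T^[(j s : ℕ)] y) < δ}

/-- `f̃_{n,δ}(x,y) = 1 - (max match)/n`. -/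
noncomputable def wFbar (T : X → X) (n : ℕ) (δ : ℝ) (x y : X) : ℝ :=
  1 - (wFit T n δ x y : ℝ) / n

/-- The Feldman–Katok pseudometric without the order-preserving requirement. -/
noncomputable def dFKt (T : X → X) (x y : X) : ℝ :=
  sInf {δ : ℝ | 0 < δ ∧ Filter.limsup (fun n => wFbar T n δ x y) atTop < δ}

/-- `F_n(x,y) = (1/n) inf_{σ ∈ S_n} ∑_{k<n} d(T^k x, T^{σ k} y)`. -/
noncomputable def weakMeanN (T : X → X) (n : ℕ) (x y : X) : ℝ :=
  (1 / n : ℝ) * ⨅ σ : Equiv.Perm (Fin n),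
    ∑ k : Fin n, dist (T^[(k : ℕ)] x) (T^[(σ k : ℕ)] y)

/-- The weak-mean pseudometric `F(x,y) = limsup_n F_n(x,y)`. -/
noncomputable def weakMean (T : X → X) (x y : X) : ℝ :=
  Filter.limsup (fun n => weakMeanN T n x y) Filter.atTop

lemma wFit_set_nonempty (T : X → X) (n : ℕ) (δ : ℝ) (x y : X) :
    Set.Nonempty {k : ℕ | ∃ i j : Fin k → Fin n, Function.Injective i ∧ Function.Injective j ∧
    ∀ s, dist (T^[(i s : ℕ)] x) (T^[(j s : ℕ)] y) < δ} :=
  ⟨0, Fin.elim0, Fin.elim0, fun a => a.elim0, fun a => a.elim0, fun s => s.elim0⟩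

lemma wFit_set_bdd (T : X → X) (n : ℕ) (δ : ℝ) (x y : X) :
    BddAbove {k : ℕ | ∃ i j : Fin k → Fin n, Function.Injective i ∧ Function.Injective j ∧
    ∀ s, dist (T^[(i s : ℕ)] x) (T^[(j s : ℕ)] y) < δ} := by
  refine ⟨n, fun k hk => ?_⟩
  obtain ⟨i, j, hi, hj, h⟩ := hk
  simpa using Fintype.card_le_of_injective i hi

lemma wFit_mem (T : X → X) (n : ℕ) (δ : ℝ) (x y : X) :
    wFit T n δ x y ∈ {k : ℕ | ∃ i j : Fin k → Fin n, Function.Injective i ∧ Function.Injective j ∧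
    ∀ s, dist (T^[(i s : ℕ)] x) (T^[(j s : ℕ)] y) < δ} :=
  Nat.sSup_mem (wFit_set_nonempty T n δ x y) (wFit_set_bdd T n δ x y)

lemma wFit_le (T : X → X) (n : ℕ) (δ : ℝ) (x y : X) : wFit T n δ x y ≤ n := by
  obtain ⟨i, j, hi, hj, h⟩ := wFit_mem T n δ x y
  simpa using Fintype.card_le_of_injective i hi

open Classical in
lemma sum_bound (T : X → X) (hd : ∀ a b : X, dist a b ≤ 1) (x y : X) (δ : ℝ) (hδ : 0 < δ)
    {n k : ℕ} (hn : 0 < n) (hkn : k ≤ n) (i j : Fin k → Fin n)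
    (hi : Function.Injective i) (hj : Function.Injective j)
    (h : ∀ s, dist (T^[(i s : ℕ)] x) (T^[(j s : ℕ)] y) < δ) :
    weakMeanN T n x y ≤ δ + (1 - (k : ℝ) / n) := by
  unfold weakMeanN
  -- extend matching to a permutation
  set e : {a : Fin n // a ∈ Set.range i} ≃ {a : Fin n // a ∈ Set.range j} :=
    (Equiv.ofInjective i hi).symm.trans (Equiv.ofInjective j hj) with he
  set σ : Equiv.Perm (Fin n) := e.extendSubtype with hσ
  have hσi : ∀ s : Fin k, σ (i s) = j s := by
    intro s
    have hm : i s ∈ Set.range i := ⟨s, rfl⟩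
    have h2 := Equiv.extendSubtype_apply_of_mem e (i s) hm
    rw [hσ, h2, he]
    simp only [Equiv.trans_apply, Equiv.ofInjective_symm_apply, Equiv.ofInjective_apply]
  -- bound the sum for σ
  set A : Finset (Fin n) := Finset.univ.image i with hA
  have hcardA : A.card = k := by
    rw [hA, Finset.card_image_of_injective _ hi, Finset.card_univ, Fintype.card_fin]
  have hsum1 : ∑ a ∈ A, dist (T^[(a : ℕ)] x) (T^[(σ a : ℕ)] y) ≤ k * δ := by
    have := Finset.sum_le_card_nsmul A (fun a => dist (T^[(a : ℕ)] x) (T^[(σ a : ℕ)] y)) δ ?_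
    · rw [hcardA] at this; simpa [nsmul_eq_mul] using this
    · intro a ha
      rw [hA, Finset.mem_image] at ha
      obtain ⟨s, _, rfl⟩ := ha
      show dist (T^[((i s) : ℕ)] x) (T^[((σ (i s)) : ℕ)] y) ≤ δ
      rw [hσi s]
      exact (h s).le
  have hsum2 : ∑ a ∈ Aᶜ, dist (T^[(a : ℕ)] x) (T^[(σ a : ℕ)] y) ≤ (n - k : ℕ) := by
    have := Finset.sum_le_card_nsmul Aᶜ (fun a => dist (T^[(a : ℕ)] x) (T^[(σ a : ℕ)] y)) 1
      (fun a _ => hd _ _)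
    rw [Finset.card_compl, hcardA, Fintype.card_fin] at this
    simpa [nsmul_eq_mul] using this
  have hsum : ∑ a : Fin n, dist (T^[(a : ℕ)] x) (T^[(σ a : ℕ)] y) ≤ k * δ + (n - k : ℕ) := by
    rw [← Finset.sum_add_sum_compl A]
    exact add_le_add hsum1 hsum2
  have hinf : (⨅ σ : Equiv.Perm (Fin n),
      ∑ a : Fin n, dist (T^[(a : ℕ)] x) (T^[(σ a : ℕ)] y)) ≤ k * δ + (n - k : ℕ) := by
    refine le_trans (ciInf_le ⟨0, ?_⟩ σ) hsum
    rintro r ⟨τ, rfl⟩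
    exact Finset.sum_nonneg fun a _ => dist_nonneg
  have hnR : (0:ℝ) < n := by exact_mod_cast hn
  have hcast : ((n - k : ℕ) : ℝ) = (n : ℝ) - k := by
    push_cast [Nat.cast_sub hkn]; ring
  have hkR : (k : ℝ) ≤ n := by exact_mod_cast hkn
  calc (1 / n : ℝ) * ⨅ σ : Equiv.Perm (Fin n),
        ∑ a : Fin n, dist (T^[(a : ℕ)] x) (T^[(σ a : ℕ)] y)
      ≤ (1 / n : ℝ) * (k * δ + ((n:ℝ) - k)) := by
        rw [← hcast]
        exact mul_le_mul_of_nonneg_left hinf (by positivity)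
    _ = ((k:ℝ) * δ + ((n:ℝ) - k)) / n := by ring
    _ ≤ ((n:ℝ) * δ + ((n:ℝ) - k)) / n := by
        exact (div_le_div_iff_of_pos_right hnR).mpr (by nlinarith)
    _ = δ + (1 - (k : ℝ) / n) := by field_simp

lemma key_bound (T : X → X) (hd : ∀ a b : X, dist a b ≤ 1) (x y : X) (δ : ℝ) (hδ : 0 < δ)
    {n : ℕ} (hn : 0 < n) : weakMeanN T n x y ≤ δ + wFbar T n δ x y := by
  obtain ⟨i, j, hi, hj, h⟩ := wFit_mem T n δ x y
  exact sum_bound T hd x y δ hδ hn (wFit_le T n δ x y) i j hi hj h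

lemma wFbar_nonneg (T : X → X) (n : ℕ) (δ : ℝ) (x y : X) : 0 ≤ wFbar T n δ x y := by
  unfold wFbar
  rcases Nat.eq_zero_or_pos n with rfl | hn
  · simp
  · have h1 : (wFit T n δ x y : ℝ) / n ≤ 1 := by
      rw [div_le_one (by exact_mod_cast hn)]
      exact_mod_cast wFit_le T n δ x y
    linarith

lemma wFbar_le_one (T : X → X) (n : ℕ) (δ : ℝ) (x y : X) : wFbar T n δ x y ≤ 1 := by
  unfold wFbar
  have : (0:ℝ) ≤ (wFit T n δ x y : ℝ) / n := by positivity
  linarith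

lemma weakMeanN_nonneg (T : X → X) (n : ℕ) (x y : X) : 0 ≤ weakMeanN T n x y := by
  unfold weakMeanN
  apply mul_nonneg (by positivity)
  exact Real.iInf_nonneg fun σ => Finset.sum_nonneg fun a _ => dist_nonneg

/-- If the metric is bounded by `1`, then `F(x,y) ≤ 2 d̃_{FK}(x,y)`. -/
theorem weakMean_le_two_dFKt (T : X → X) (hd : ∀ a b : X, dist a b ≤ 1) (x y : X) :
    weakMean T x y ≤ 2 * dFKt T x y := by
  set S := {δ : ℝ | 0 < δ ∧ Filter.limsup (fun n => wFbar T n δ x y) atTop < δ} with hS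
  have hlim1 : ∀ δ : ℝ, Filter.limsup (fun n => wFbar T n δ x y) atTop ≤ 1 := by
    intro δ
    apply Filter.limsup_le_of_le
    · exact Filter.isCoboundedUnder_le_of_le atTop fun n => wFbar_nonneg T n δ x y
    · exact Filter.Eventually.of_forall fun n => wFbar_le_one T n δ x y
  have hSne : S.Nonempty := ⟨2, two_pos, lt_of_le_of_lt (hlim1 2) one_lt_two⟩
  have key : ∀ δ ∈ S, weakMean T x y ≤ 2 * δ := by
    rintro δ ⟨hδ, hlimδ⟩
    have hev : ∀ᶠ n in atTop, wFbar T n δ x y < δ :=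
      Filter.eventually_lt_of_limsup_lt hlimδ
        (Filter.isBoundedUnder_of ⟨1, fun n => wFbar_le_one T n δ x y⟩)
    have hev2 : ∀ᶠ n in atTop, weakMeanN T n x y ≤ 2 * δ := by
      filter_upwards [hev, Filter.eventually_gt_atTop 0] with n h1 h2
      have := key_bound T hd x y δ hδ h2
      linarith
    apply Filter.limsup_le_of_le
    · exact Filter.isCoboundedUnder_le_of_le atTop fun n => weakMeanN_nonneg T n x y
    · exact hev2
  have hhalf : weakMean T x y / 2 ≤ sInf S :=
    le_csInf hSne fun δ hδ => by linarith [key δ hδ]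
  unfold dFKt
  rw [← hS]
  linarith
end
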